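/- arXiv:2102.13487 — 2 statements merged into one kernel-verified Lean document; each statement's English description precedes it below -/
import Mathlib

section
/- State-space realization of the barycentric form: let ξ_1,…,ξ_n ∈ ℂ be distinct, w_1,…,w_n, h_1,…,h_n ∈ ℂ. Set b̂ = (w_1,…,w_n)ᵀ, Ξ = diag(ξ_1,…,ξ_n), Â = Ξ − b̂ eᵀ where e is the all-ones vector, and ĉᵀ = (h_1,…,h_n). Then for every s ∈ ℂ such that sI − Â is invertible and s ≠ ξ_k for all k and 1 + Σ_k w_k/(s−ξ_k) ≠ 0, one has ĉᵀ (sI − Â)⁻¹ b̂ = (Σ_{k=1}^n w_k h_k/(s−ξ_k)) / (1 + Σ_{k=1}^n w_k/(s−ξ_k)). -/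
open Matrix Finset

/-- State-space realization of the barycentric form. -/
theorem barycentric_state_space {n : ℕ} (hn : 1 ≤ n) (ξ w h : Fin n → ℂ)
    (hξ : Function.Injective ξ)
    (A : Matrix (Fin n) (Fin n) ℂ)
    (hA : A = Matrix.diagonal ξ - Matrix.vecMulVec w (fun _ => 1))
    (s : ℂ) (hinv : IsUnit (s • (1 : Matrix (Fin n) (Fin n) ℂ) - A))
    (hs : ∀ k, s ≠ ξ k)
    (hden : (1 : ℂ) + ∑ k, w k / (s - ξ k) ≠ 0) :
    h ⬝ᵥ ((s • (1 : Matrix (Fin n) (Fin n) ℂ) - A)⁻¹ *ᵥ w) =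
      (∑ k, w k * h k / (s - ξ k)) / (1 + ∑ k, w k / (s - ξ k)) := by
  set M := s • (1 : Matrix (Fin n) (Fin n) ℂ) - A with hM
  set x := M⁻¹ *ᵥ w with hx
  have hsk : ∀ k, s - ξ k ≠ 0 := fun k => sub_ne_zero.mpr (hs k)
  set S := ∑ k, w k / (s - ξ k) with hS
  have hMform : M = Matrix.diagonal (fun k => s - ξ k)
      + Matrix.vecMulVec w (fun _ => 1) := by
    rw [hM, hA]
    ext i j
    by_cases hij : i = j
    · simp [Matrix.diagonal, Matrix.vecMulVec, Matrix.one_apply, hij]; ring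
    · simp [Matrix.diagonal, Matrix.vecMulVec, Matrix.one_apply, hij]
  have hMx : M *ᵥ x = w := by
    rw [hx, mulVec_mulVec, mul_nonsing_inv _ ((isUnit_iff_isUnit_det M).mp hinv),
      one_mulVec]
  set σ := ∑ j, x j with hσ
  have hcomp : ∀ i, (s - ξ i) * x i + w i * σ = w i := by
    intro i
    have := congrFun hMx i
    rw [hMform, add_mulVec] at this
    have hv : ((Matrix.vecMulVec w fun _ => (1:ℂ)) *ᵥ x) i = w i * σ := by
      simp [Matrix.vecMulVec, Matrix.mulVec, dotProduct, hσ, Finset.mul_sum]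
    rw [Pi.add_apply, mulVec_diagonal, hv] at this
    exact this
  have hxi : ∀ i, x i = w i / (s - ξ i) * (1 - σ) := by
    intro i
    rw [div_mul_eq_mul_div, eq_div_iff (hsk i)]
    linear_combination hcomp i
  have hσeq : σ = S * (1 - σ) := by
    have h2 : ∑ j, x j = ∑ j, w j / (s - ξ j) * (1 - σ) :=
      Finset.sum_congr rfl fun j _ => hxi j
    rw [← Finset.sum_mul] at h2
    exact h2
  have hmul : σ * (1 + S) = S := by linear_combination hσeq
  have hσval : 1 - σ = 1 / (1 + S) := by
    rw [eq_div_iff hden]; linear_combination -hmul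
  rw [show h ⬝ᵥ x = ∑ i, h i * x i from rfl]
  rw [eq_div_iff hden, Finset.sum_mul]
  apply Finset.sum_congr rfl
  intro i _
  rw [hxi i, hσval]
  calc h i * (w i / (s - ξ i) * (1 / (1 + S))) * (1 + S)
      = h i * (w i / (s - ξ i)) * (1 / (1 + S) * (1 + S)) := by ring
    _ = w i * h i / (s - ξ i) := by
        rw [one_div, inv_mul_cancel₀ hden]; ring
end

section
/- State-space realization of the two-variable barycentric form: with Â = diag(ξ_1,…,ξ_n) − b̂ eᵀ, b̂ = (w_1,…,w_n)ᵀ, and K̂ ∈ ℂ^{1×n²} the row vector obtained by vectorizing the matrix M̂ with entries M̂_{i,j} = h_{i,j}, for any s, z such that sI−Â and zI−Â are invertible, s,z ∉ {ξ_1,…,ξ_n}, and both denominators 1+Σ_k w_k/(s−ξ_k) and 1+Σ_ℓ w_ℓ/(z−ξ_ℓ) are nonzero, one has K̂ [ (sI−Â)⁻¹ b̂ ⊗ (zI−Â)⁻¹ b̂ ] = (Σ_{k,ℓ} h_{k,ℓ} w_k w_ℓ /((s−ξ_k)(z−ξ_ℓ))) / ((1+Σ_k w_k/(s−ξ_k))(1+Σ_ℓ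 w_ℓ/(z−ξ_ℓ))). -/
open Matrix Finset

lemma inv_mulVec_eq {n : ℕ} (M : Matrix (Fin n) (Fin n) ℂ) (hM : IsUnit M)
    (x b : Fin n → ℂ) (hx : M *ᵥ x = b) : M⁻¹ *ᵥ b = x := by
  rw [← hx, Matrix.mulVec_mulVec,
    Matrix.nonsing_inv_mul _ ((Matrix.isUnit_iff_isUnit_det M).mp hM), Matrix.one_mulVec]

lemma resolvent_mulVec {n : ℕ} (ξ w : Fin n → ℂ) (A : Matrix (Fin n) (Fin n) ℂ)
    (hA : A = Matrix.diagonal ξ - Matrix.vecMulVec w (fun _ => 1)) (s : ℂ)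
    (hsinv : IsUnit (s • (1 : Matrix (Fin n) (Fin n) ℂ) - A))
    (hs : ∀ k, s ≠ ξ k)
    (hds : (1 : ℂ) + ∑ k, w k / (s - ξ k) ≠ 0) :
    (s • (1 : Matrix (Fin n) (Fin n) ℂ) - A)⁻¹ *ᵥ w =
      fun k => w k / (s - ξ k) / (1 + ∑ j, w j / (s - ξ j)) := by
  set d : ℂ := 1 + ∑ j, w j / (s - ξ j) with hd
  apply inv_mulVec_eq _ hsinv
  funext k
  have hsk : ∀ j, s - ξ j ≠ 0 := fun j => sub_ne_zero.mpr (hs j)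
  simp only [hA, Matrix.mulVec, dotProduct, Matrix.sub_apply, Matrix.smul_apply,
    Matrix.one_apply, Matrix.diagonal_apply, Matrix.vecMulVec_apply, smul_eq_mul, mul_one]
  have : ∀ j, ((s * if k = j then 1 else 0) - ((if k = j then ξ k else 0) - w k)) *
      (w j / (s - ξ j) / d)
      = (if k = j then (s - ξ j) * (w j / (s - ξ j) / d) else 0) + w k * (w j / (s - ξ j) / d) := by
    intro j
    rcases eq_or_ne k j with rfl | hne
    · rw [if_pos rfl, if_pos rfl, if_pos rfl]; ring
    · rw [if_neg hne, if_neg hne, if_neg hne]; ring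
  rw [Finset.sum_congr rfl fun j _ => this j, Finset.sum_add_distrib, Finset.sum_ite_eq,
    if_pos (Finset.mem_univ k), ← Finset.mul_sum, ← Finset.sum_div]
  have h1 : (s - ξ k) * (w k / (s - ξ k) / d) = w k / d := by
    rw [div_div, mul_div_assoc', mul_div_mul_left _ _ (hsk k)]
  have h2 : (∑ j, w j / (s - ξ j)) / d = 1 - 1 / d := by
    rw [eq_sub_iff_add_eq, ← add_div, add_comm]
    exact div_self hds
  rw [h1, h2]
  ring

/-- State-space realization of the two-variable barycentric form. -/
theorem two_variable_state_space {n : ℕ} (hn : 1 ≤ n)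
    (ξ w : Fin n → ℂ) (h : Fin n → Fin n → ℂ)
    (hξ : Function.Injective ξ)
    (A : Matrix (Fin n) (Fin n) ℂ)
    (hA : A = Matrix.diagonal ξ - Matrix.vecMulVec w (fun _ => 1))
    (K : Fin n × Fin n → ℂ) (hK : ∀ k l, K (k, l) = h k l)
    (s z : ℂ)
    (hsinv : IsUnit (s • (1 : Matrix (Fin n) (Fin n) ℂ) - A))
    (hzinv : IsUnit (z • (1 : Matrix (Fin n) (Fin n) ℂ) - A))
    (hs : ∀ k, s ≠ ξ k) (hz : ∀ k, z ≠ ξ k)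
    (hds : (1 : ℂ) + ∑ k, w k / (s - ξ k) ≠ 0)
    (hdz : (1 : ℂ) + ∑ l, w l / (z - ξ l) ≠ 0) :
    K ⬝ᵥ (fun q : Fin n × Fin n =>
        ((s • (1 : Matrix (Fin n) (Fin n) ℂ) - A)⁻¹ *ᵥ w) q.1 *
        ((z • (1 : Matrix (Fin n) (Fin n) ℂ) - A)⁻¹ *ᵥ w) q.2) =
      (∑ k, ∑ l, h k l * w k * w l / ((s - ξ k) * (z - ξ l))) /
        ((1 + ∑ k, w k / (s - ξ k)) * (1 + ∑ l, w l / (z - ξ l))) := by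
  rw [resolvent_mulVec ξ w A hA s hsinv hs hds, resolvent_mulVec ξ w A hA z hzinv hz hdz]
  simp only [dotProduct]
  rw [Finset.sum_div, Fintype.sum_prod_type]
  refine Finset.sum_congr rfl fun k _ => ?_
  rw [Finset.sum_div]
  refine Finset.sum_congr rfl fun l _ => ?_
  rw [hK k l]
  have h1 : s - ξ k ≠ 0 := sub_ne_zero.mpr (hs k)
  have h2 : z - ξ l ≠ 0 := sub_ne_zero.mpr (hz l)
  field_simp
end
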